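/- In the setting of the forward-chaining chain S = W_0 ⊊ W_1 ⊊ ⋯ ⊊ W_t ⊇ S' associated with a round-minimal L-optimal CNF Φ for price_L(S,S'), with B_i a smallest member of 𝓑 contained in W_i for i = 0,…,t−1 and B_t := S', we have W_{i+1} \ W_i ⊆ B_{i+1} for every i = 0,…,t−1. -/
import Mathlib


open Finset

variable {V : Type*} [Fintype V] [DecidableEq V]

/-- A pure Horn CNF is a finite set of clauses `(B, v)`: body `B`, head `v`,
with `B` nonempty and `v ∉ B`. -/
def PureHorn (Φ : Finset (Finset V × V)) : Prop :=
  ∀ c ∈ Φ, c.1.Nonempty ∧ c.2 ∉ c.1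

/-- A set `W` is closed under the clauses of `Φ`. -/
def HornClosed (Φ : Finset (Finset V × V)) (W : Set V) : Prop :=
  ∀ c ∈ Φ, ↑c.1 ⊆ W → c.2 ∈ W

/-- Forward-chaining closure `F_Φ(Z)`: the smallest set containing `Z`
that is closed under the clauses of `Φ`. -/
def hornClosure (Φ : Finset (Finset V × V)) (Z : Set V) : Set V :=
  ⋂₀ {W : Set V | Z ⊆ W ∧ HornClosed Φ W}

/-- `Ψ_𝓑 = ⋀_{B ∈ 𝓑} B → (V \ B)`. -/
def keyCNF (𝓑 : Finset (Finset V)) : Finset (Finset V × V) :=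
  𝓑.biUnion fun B => (Finset.univ \ B).image fun v => (B, v)

/-- `Φ` represents the key Horn function `h_𝓑`, i.e. `Φ` is a pure Horn CNF
equivalent to `Ψ_𝓑`. -/
def Represents (𝓑 : Finset (Finset V)) (Φ : Finset (Finset V × V)) : Prop :=
  PureHorn Φ ∧ ∀ Z : Finset V, hornClosure Φ ↑Z = hornClosure (keyCNF 𝓑) ↑Z

/-- (B) number of (distinct) bodies. -/
def sizeB (Φ : Finset (Finset V × V)) : ℕ := (Φ.image Prod.fst).card
/-- (BA) body area `Σ_i |B_i|` over the distinct bodies. -/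
def sizeBA (Φ : Finset (Finset V × V)) : ℕ := ∑ B ∈ Φ.image Prod.fst, B.card
/-- (C) number of clauses `Σ_i |H_i|`. -/
def sizeC (Φ : Finset (Finset V × V)) : ℕ := Φ.card
/-- (TA) total area `Σ_i (|B_i| + |H_i|)`. -/
def sizeTA (Φ : Finset (Finset V × V)) : ℕ := sizeBA Φ + sizeC Φ
/-- (BC) bodies plus clauses `Σ_i (|H_i| + 1)`. -/
def sizeBC (Φ : Finset (Finset V × V)) : ℕ := sizeB Φ + sizeC Φ
/-- (L) number of literals `Σ_i (|B_i| + 1)·|H_i|`. -/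
def sizeL (Φ : Finset (Finset V × V)) : ℕ := ∑ c ∈ Φ, (c.1.card + 1)

/-- `μ` is one of the six size measures. -/
def IsMeasure (μ : Finset (Finset V × V) → ℕ) : Prop :=
  μ = sizeB ∨ μ = sizeBA ∨ μ = sizeTA ∨ μ = sizeC ∨ μ = sizeBC ∨ μ = sizeL

/-- `OPT_μ(𝓑)`: minimum `μ`-size of a CNF representing `h_𝓑`. -/
noncomputable def OPT (μ : Finset (Finset V × V) → ℕ) (𝓑 : Finset (Finset V)) : ℕ :=
  sInf {s : ℕ | ∃ Φ : Finset (Finset V × V), Represents 𝓑 Φ ∧ μ Φ = s}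

/-- `price_μ(S,T)`: minimum `μ`-size of a pure Horn CNF with bodies in `𝓑`
whose forward chaining from `S` reaches all of `T`. -/
noncomputable def price (μ : Finset (Finset V × V) → ℕ) (𝓑 : Finset (Finset V))
    (S T : Finset V) : ℕ :=
  sInf {s : ℕ | ∃ Φ : Finset (Finset V × V),
    PureHorn Φ ∧ (∀ c ∈ Φ, c.1 ∈ 𝓑) ∧ ↑T ⊆ hornClosure Φ ↑S ∧ μ Φ = s}

/-- One round of forward chaining. -/
def fcStep (Φ : Finset (Finset V × V)) (W : Finset V) : Finset V :=
  W ∪ (Φ.filter fun c => c.1 ⊆ W).image Prod.snd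

/-- The forward-chaining chain `W_0 = S`, `W_{i+1} = fcStep Φ W_i`. -/
def fcChain (Φ : Finset (Finset V × V)) (S : Finset V) : ℕ → Finset V
  | 0 => S
  | i + 1 => fcStep Φ (fcChain Φ S i)

/-- The CNF `⋀_{i=0}^{t-1} Bs i → (Bs (i+1) \ (S ∪ ⋃_{j=1}^{i} Bs j))`. -/
def chainCNF (S : Finset V) (Bs : ℕ → Finset V) (t : ℕ) :
    Finset (Finset V × V) :=
  (Finset.range t).biUnion fun i =>
    (Bs (i + 1) \ (S ∪ (Finset.Icc 1 i).biUnion Bs)).image fun v => (Bs i, v)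

-- auxiliary lemmas

lemma mem_fcStep {Φ : Finset (Finset V × V)} {W : Finset V} {u : V} :
    u ∈ fcStep Φ W ↔ u ∈ W ∨ ∃ c ∈ Φ, c.1 ⊆ W ∧ c.2 = u := by
  unfold fcStep
  simp only [Finset.mem_union, Finset.mem_image, Finset.mem_filter]
  constructor
  · rintro (h | ⟨c, ⟨h1, h2⟩, h3⟩)
    exacts [Or.inl h, Or.inr ⟨c, h1, h2, h3⟩]
  · rintro (h | ⟨c, h1, h2, h3⟩)
    exacts [Or.inl h, Or.inr ⟨c, ⟨h1, h2⟩, h3⟩]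

lemma fcChain_mono {Φ : Finset (Finset V × V)} {S : Finset V} {j k : ℕ} (h : j ≤ k) :
    fcChain Φ S j ⊆ fcChain Φ S k := by
  induction k with
  | zero => simp_all
  | succ k ih =>
    rcases Nat.lt_or_ge j (k+1) with h' | h'
    · exact (ih (Nat.lt_succ_iff.mp h')).trans Finset.subset_union_left
    · have : j = k + 1 := le_antisymm h h'
      subst this; exact subset_rfl

lemma subset_hornClosure (Φ : Finset (Finset V × V)) (Z : Set V) : Z ⊆ hornClosure Φ Z := by
  intro x hx
  rw [hornClosure, Set.mem_sInter]
  exact fun T hT => hT.1 hx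

lemma hornClosure_closed (Φ : Finset (Finset V × V)) (Z : Set V) :
    HornClosed Φ (hornClosure Φ Z) := by
  intro c hc hsub
  rw [hornClosure, Set.mem_sInter]
  intro T hT
  exact hT.2 c hc (hsub.trans (Set.sInter_subset_of_mem hT))

lemma hornClosure_le {Φ : Finset (Finset V × V)} {Z T : Set V}
    (h1 : Z ⊆ T) (h2 : HornClosed Φ T) : hornClosure Φ Z ⊆ T :=
  Set.sInter_subset_of_mem ⟨h1, h2⟩

lemma fcChain_subset_hornClosure (Φ : Finset (Finset V × V)) (S : Finset V) :
    ∀ j, ↑(fcChain Φ S j) ⊆ hornClosure Φ ↑S := by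
  intro j; induction j with
  | zero => exact subset_hornClosure _ _
  | succ j ih =>
    intro u hu
    rcases mem_fcStep.mp hu with h | ⟨c, hc, hb, he⟩
    · exact ih h
    · exact he ▸ hornClosure_closed Φ ↑S c hc (fun x hx => ih (hb hx))

lemma hornClosure_subset_of_stab {Φ : Finset (Finset V × V)} {S : Finset V} {t : ℕ}
    (h : fcChain Φ S t = fcChain Φ S (t+1)) :
    hornClosure Φ ↑S ⊆ ↑(fcChain Φ S t) := by
  apply hornClosure_le
  · exact_mod_cast Finset.coe_subset.mpr (fcChain_mono (Nat.zero_le t) : fcChain Φ S 0 ⊆ _)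
  · intro c hc hsub
    have h2 : c.2 ∈ fcStep Φ (fcChain Φ S t) :=
      mem_fcStep.mpr (Or.inr ⟨c, hc, by exact_mod_cast hsub, rfl⟩)
    have : fcStep Φ (fcChain Φ S t) = fcChain Φ S t := (h.symm : _)
    rw [this] at h2
    exact_mod_cast h2

lemma price_le_sizeL {𝓑 : Finset (Finset V)} {S T : Finset V} {Φ : Finset (Finset V × V)}
    (h1 : PureHorn Φ) (h2 : ∀ c ∈ Φ, c.1 ∈ 𝓑) (h3 : ↑T ⊆ hornClosure Φ ↑S) :
    price sizeL 𝓑 S T ≤ sizeL Φ :=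
  Nat.sInf_le ⟨Φ, h1, h2, h3, rfl⟩

/-- common step: membership in closure of a sub-CNF avoiding head `v`, up to round `i+1`. -/
lemma key1 {Φ Φ' : Finset (Finset V × V)} {S : Finset V} {v : V} {i : ℕ}
    (hv : v ∉ fcChain Φ S i)
    (hsub : ∀ c ∈ Φ, c.2 ≠ v → c ∈ Φ') :
    ∀ j, j ≤ i + 1 → ∀ u ∈ fcChain Φ S j, u ≠ v → (u : V) ∈ hornClosure Φ' ↑S := by
  intro j
  induction j with
  | zero => intro _ u hu _; exact subset_hornClosure _ _ (by exact_mod_cast hu)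
  | succ j ih =>
    intro hj u hu hune
    have hj' : j ≤ i + 1 := Nat.le_of_succ_le hj
    rcases mem_fcStep.mp hu with h | ⟨c, hc, hb, he⟩
    · exact ih hj' u h hune
    · have hji : j ≤ i := Nat.lt_succ_iff.mp hj
      have hcΦ' : c ∈ Φ' := hsub c hc (by rw [he]; exact hune)
      refine he ▸ hornClosure_closed Φ' ↑S c hcΦ' ?_
      intro x hx
      have hxW : x ∈ fcChain Φ S j := hb hx
      have hxv : x ≠ v := fun h' => hv (fcChain_mono hji (h' ▸ hxW))
      exact ih hj' x hxW hxv
set_option maxHeartbeats 1000000 in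
/-- Proposition 2: in the forward-chaining chain of a round-minimal L-optimal
CNF `Φ` for `price_L(S,S')`, `W_{i+1} \ W_i ⊆ B_{i+1}` for `i = 0,…,t-1`. -/
theorem stmt11 {V : Type*} [Fintype V] [DecidableEq V]
    (𝓑 : Finset (Finset V))
    (hne : ∀ B ∈ 𝓑, B.Nonempty) (hproper : ∀ B ∈ 𝓑, B ≠ Finset.univ)
    (hsperner : ∀ B ∈ 𝓑, ∀ B' ∈ 𝓑, B ⊆ B' → B = B')
    (hcover : ∀ v : V, ∃ B ∈ 𝓑, v ∈ B)
    (hinter : ∀ v : V, ∃ B ∈ 𝓑, v ∉ B)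
    (S S' : Finset V) (hS : ∃ B ∈ 𝓑, B ⊆ S)
    (Φ : Finset (Finset V × V)) (t : ℕ)
    (hPH : PureHorn Φ) (hbodies : ∀ c ∈ Φ, c.1 ∈ 𝓑)
    (hSreach : ↑S' ⊆ hornClosure Φ ↑S)
    (hopt : sizeL Φ = price sizeL 𝓑 S S')
    (hstab : fcChain Φ S t = fcChain Φ S (t + 1))
    (htleast : ∀ j < t, fcChain Φ S j ≠ fcChain Φ S (j + 1))
    (hround : ∀ (Φ' : Finset (Finset V × V)) (t' : ℕ), PureHorn Φ' →
      (∀ c ∈ Φ', c.1 ∈ 𝓑) → ↑S' ⊆ hornClosure Φ' ↑S →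
      sizeL Φ' = price sizeL 𝓑 S S' →
      fcChain Φ' S t' = fcChain Φ' S (t' + 1) → t ≤ t')
    (Bseq : ℕ → Finset V)
    (hBseq : ∀ i < t, Bseq i ∈ 𝓑 ∧ Bseq i ⊆ fcChain Φ S i ∧
      ∀ B' ∈ 𝓑, B' ⊆ fcChain Φ S i → (Bseq i).card ≤ B'.card)
    (hBt : Bseq t = S')
    : ∀ i : ℕ, i < t → fcChain Φ S (i + 1) \ fcChain Φ S i ⊆ Bseq (i + 1) := by
  intro i hi v hv
  by_contra hvB
  rw [Finset.mem_sdiff] at hv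
  obtain ⟨hv1, hv0⟩ := hv
  -- S' ⊆ W t
  have hS'Wt : S' ⊆ fcChain Φ S t := by
    intro x hx
    have := (hornClosure_subset_of_stab hstab) (hSreach (by exact_mod_cast hx))
    exact_mod_cast this
  -- a clause producing v at round i+1
  have hcv : ∃ c, c ∈ Φ ∧ c.1 ⊆ fcChain Φ S i ∧ c.2 = v := by
    rcases mem_fcStep.mp hv1 with h | ⟨c, hc, hb, he⟩
    · exact absurd h hv0
    · exact ⟨c, hc, hb, he⟩
  obtain ⟨cv, hcvΦ, hcvb, hcvh⟩ := hcv
  obtain ⟨hBi𝓑, hBiW, hBimin⟩ := hBseq i hi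
  have hcvcard : (Bseq i).card ≤ cv.1.card := hBimin cv.1 (hbodies cv hcvΦ) hcvb
  rcases (Nat.succ_le_of_lt hi).lt_or_eq with hit | hit
  · -- case i + 1 < t
    obtain ⟨hB1𝓑, hB1W, hB1min⟩ := hBseq (i+1) hit
    have hle : (Bseq (i+1)).card ≤ (Bseq i).card :=
      hB1min _ hBi𝓑 (hBiW.trans (fcChain_mono (Nat.le_succ i)))
    rcases hle.lt_or_eq with hlt | heq
    · -- subcase |B_{i+1}| < |B_i| : replace head-v clauses by (B_{i+1}, v)
      set Φ' : Finset (Finset V × V) :=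
        insert (Bseq (i+1), v) (Φ.filter fun c => c.2 ≠ v) with hΦ'def
      have hsub : ∀ c ∈ Φ, c.2 ≠ v → c ∈ Φ' := fun c hc h =>
        Finset.mem_insert_of_mem (Finset.mem_filter.mpr ⟨hc, h⟩)
      have hPH' : PureHorn Φ' := by
        intro c hc
        rcases Finset.mem_insert.mp hc with h | h
        · subst h; exact ⟨hne _ hB1𝓑, hvB⟩
        · exact hPH c (Finset.mem_filter.mp h).1
      have hbodies' : ∀ c ∈ Φ', c.1 ∈ 𝓑 := by
        intro c hc
        rcases Finset.mem_insert.mp hc with h | h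
        · subst h; exact hB1𝓑
        · exact hbodies c (Finset.mem_filter.mp h).1
      -- feasibility
      have hk1 := key1 (Φ := Φ) (Φ' := Φ') (S := S) (v := v) (i := i) hv0 hsub
      have hB1T : ↑(Bseq (i+1)) ⊆ hornClosure Φ' ↑S := by
        intro x hx
        have hx' : x ∈ Bseq (i+1) := by exact_mod_cast hx
        exact hk1 (i+1) le_rfl x (hB1W hx') (fun h => hvB (h ▸ hx'))
      have hvT : v ∈ hornClosure Φ' ↑S :=
        hornClosure_closed Φ' ↑S (Bseq (i+1), v) (Finset.mem_insert_self _ _) hB1T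
      have hWT : ∀ j, ↑(fcChain Φ S j) ⊆ hornClosure Φ' ↑S := by
        intro j; induction j with
        | zero => exact subset_hornClosure _ _
        | succ j ih =>
          intro u hu
          rcases mem_fcStep.mp hu with h | ⟨c, hc, hb, he⟩
          · exact ih h
          · by_cases hcv2 : c.2 = v
            · rw [← he, hcv2]; exact hvT
            · exact he ▸ hornClosure_closed Φ' ↑S c (hsub c hc hcv2)
                (fun x hx => ih (hb hx))
      have hreach' : ↑S' ⊆ hornClosure Φ' ↑S :=
        fun x hx => hWT t (by exact_mod_cast (hS'Wt (by exact_mod_cast hx)))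
      -- size strictly decreases
      have hnotmem : (Bseq (i+1), v) ∉ Φ.filter fun c => c.2 ≠ v := by
        intro h
        exact (Finset.mem_filter.mp h).2 rfl
      have hsize' : sizeL Φ' = ((Bseq (i+1)).card + 1) +
          ∑ c ∈ Φ.filter (fun c => c.2 ≠ v), (c.1.card + 1) := by
        rw [hΦ'def, sizeL, Finset.sum_insert hnotmem]
      have hsplit : (∑ c ∈ Φ.filter (fun c => c.2 = v), (c.1.card + 1)) +
          (∑ c ∈ Φ.filter (fun c => ¬ c.2 = v), (c.1.card + 1)) = sizeL Φ :=
        Finset.sum_filter_add_sum_filter_not Φ _ _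
      have hcvfilter : cv ∈ Φ.filter (fun c => c.2 = v) :=
        Finset.mem_filter.mpr ⟨hcvΦ, hcvh⟩
      have hbig : cv.1.card + 1 ≤ ∑ c ∈ Φ.filter (fun c => c.2 = v), (c.1.card + 1) :=
        Finset.single_le_sum (f := fun c : Finset V × V => c.1.card + 1) (fun _ _ => Nat.zero_le _) hcvfilter
      have hfilter_eq : (Φ.filter fun c => c.2 ≠ v) = Φ.filter (fun c => ¬ c.2 = v) := rfl
      have hlt' : sizeL Φ' < sizeL Φ := by
        rw [hsize', hfilter_eq]; omega
      have := price_le_sizeL hPH' hbodies' hreach'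
      omega
    · -- subcase |B_{i+1}| = |B_i| : re-body level i+2 clauses with B_i, saves a round
      set L : Finset V := fcChain Φ S (i+2) \ fcChain Φ S (i+1) with hLdef
      set Φ' : Finset (Finset V × V) :=
        (Φ.filter fun c => c.2 ∉ L) ∪ L.image (fun u => (Bseq i, u)) with hΦ'def
      have hLW : ∀ u ∈ L, u ∈ fcChain Φ S (i+2) ∧ u ∉ fcChain Φ S (i+1) := by
        intro u hu; exact Finset.mem_sdiff.mp hu
      have hPH' : PureHorn Φ' := by
        intro c hc
        rcases Finset.mem_union.mp hc with h | h
        · exact hPH c (Finset.mem_filter.mp h).1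
        · obtain ⟨u, hu, rfl⟩ := Finset.mem_image.mp h
          refine ⟨hne _ hBi𝓑, fun h' => ?_⟩
          exact (hLW u hu).2 (fcChain_mono (Nat.le_succ i) (hBiW h'))
      have hbodies' : ∀ c ∈ Φ', c.1 ∈ 𝓑 := by
        intro c hc
        rcases Finset.mem_union.mp hc with h | h
        · exact hbodies c (Finset.mem_filter.mp h).1
        · obtain ⟨u, hu, rfl⟩ := Finset.mem_image.mp h
          exact hBi𝓑
      -- W t is closed under Φ
      have hWtclosed : ∀ c ∈ Φ, c.1 ⊆ fcChain Φ S t → c.2 ∈ fcChain Φ S t := by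
        intro c hc hb
        have h2 : c.2 ∈ fcStep Φ (fcChain Φ S t) := mem_fcStep.mpr (Or.inr ⟨c, hc, hb, rfl⟩)
        have h3 : fcStep Φ (fcChain Φ S t) = fcChain Φ S t := hstab.symm
        rwa [h3] at h2
      -- the chain of Φ' stays inside W t
      have keyA : ∀ j, fcChain Φ' S j ⊆ fcChain Φ S t := by
        intro j; induction j with
        | zero => exact fcChain_mono (Φ := Φ) (Nat.zero_le t)
        | succ j ih =>
          intro u hu
          rcases mem_fcStep.mp hu with h | ⟨c, hc, hb, he⟩
          · exact ih h
          · rcases Finset.mem_union.mp hc with h | h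
            · exact he ▸ hWtclosed c (Finset.mem_filter.mp h).1 (hb.trans ih)
            · obtain ⟨u', hu', h'⟩ := Finset.mem_image.mp h
              have hcu : c.2 = u' := by rw [← h']
              rw [← he, hcu]
              exact fcChain_mono (by omega : i + 2 ≤ t) (hLW u' hu').1
      -- Φ' keeps pace with Φ for the first i+1 rounds
      have keyB : ∀ j, j ≤ i + 1 → fcChain Φ S j ⊆ fcChain Φ' S j := by
        intro j; induction j with
        | zero => intro _; exact subset_rfl
        | succ j ih =>
          intro hj u hu
          rcases mem_fcStep.mp hu with h | ⟨c, hc, hb, he⟩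
          · exact fcChain_mono (Nat.le_succ j) (ih (Nat.le_of_succ_le hj) h)
          · have hc2 : c.2 ∉ L := by
              intro hmem
              exact (hLW _ hmem).2 (fcChain_mono hj (he ▸ hu))
            have hcΦ' : c ∈ Φ' := Finset.mem_union_left _ (Finset.mem_filter.mpr ⟨hc, hc2⟩)
            exact mem_fcStep.mpr (Or.inr ⟨c, hcΦ', hb.trans (ih (Nat.le_of_succ_le hj)), he⟩)
      -- Φ' is one round ahead of Φ from level i+2 on
      have keyC : ∀ s, fcChain Φ S (i+2+s) ⊆ fcChain Φ' S (i+1+s) := by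
        intro s; induction s with
        | zero =>
          intro u hu
          by_cases h : u ∈ fcChain Φ S (i+1)
          · exact keyB (i+1) le_rfl h
          · have huL : u ∈ L := Finset.mem_sdiff.mpr ⟨hu, h⟩
            have hcΦ' : (Bseq i, u) ∈ Φ' :=
              Finset.mem_union_right _ (Finset.mem_image.mpr ⟨u, huL, rfl⟩)
            exact mem_fcStep.mpr (Or.inr ⟨(Bseq i, u), hcΦ',
              hBiW.trans (keyB i (Nat.le_succ i)), rfl⟩)
        | succ s ih =>
          intro u hu
          rcases mem_fcStep.mp hu with h | ⟨c, hc, hb, he⟩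
          · exact fcChain_mono (Nat.le_succ (i+1+s)) (ih h)
          · by_cases h2 : u ∈ fcChain Φ S (i+2+s)
            · exact fcChain_mono (Nat.le_succ (i+1+s)) (ih h2)
            · have hc2 : c.2 ∉ L := by
                intro hmem
                exact h2 (fcChain_mono (by omega : i + 2 ≤ i+2+s) (he ▸ (hLW _ hmem).1))
              have hc2' : c.2 ∉ L := hc2
              have hcΦ' : c ∈ Φ' := Finset.mem_union_left _ (Finset.mem_filter.mpr ⟨hc, hc2⟩)
              exact mem_fcStep.mpr (Or.inr ⟨c, hcΦ', hb.trans ih, he⟩)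
      obtain ⟨s, hs⟩ : ∃ s, t = i + 2 + s := ⟨t - (i+2), by omega⟩
      have hUt : fcChain Φ' S (t-1) = fcChain Φ S t := by
        refine Finset.Subset.antisymm (keyA (t-1)) ?_
        have h1 := keyC s
        have h2 : i + 1 + s = t - 1 := by omega
        rw [h2, ← hs] at h1
        exact h1
      have hstab' : fcChain Φ' S (t-1) = fcChain Φ' S ((t-1)+1) := by
        refine Finset.Subset.antisymm (fcChain_mono (Nat.le_succ (t-1))) ?_
        rw [hUt]
        exact keyA ((t-1)+1)
      have hreach' : ↑S' ⊆ hornClosure Φ' ↑S := by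
        intro x hx
        have hx' : x ∈ S' := by exact_mod_cast hx
        have hxW : x ∈ fcChain Φ' S (t-1) := by rw [hUt]; exact hS'Wt hx'
        exact fcChain_subset_hornClosure Φ' S (t-1) (by exact_mod_cast hxW)
      -- size comparison
      have hex : ∀ u ∈ L, ∃ c, c ∈ Φ ∧ c.1 ⊆ fcChain Φ S (i+1) ∧ c.2 = u := by
        intro u hu
        rcases mem_fcStep.mp (hLW u hu).1 with h | ⟨c, hc, hb, he⟩
        · exact absurd h (hLW u hu).2
        · exact ⟨c, hc, hb, he⟩
      choose! m hm1 hm2 hm3 using hex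
      have hinj : ∀ x ∈ L, ∀ y ∈ L, m x = m y → x = y := by
        intro x hx y hy h
        rw [← hm3 x hx, ← hm3 y hy, h]
      have himsub : L.image m ⊆ Φ.filter (fun c => c.2 ∈ L) := by
        intro c hc
        obtain ⟨u, hu, rfl⟩ := Finset.mem_image.mp hc
        exact Finset.mem_filter.mpr ⟨hm1 u hu, by rw [hm3 u hu]; exact hu⟩
      have hsum1 : ∑ _u ∈ L, ((Bseq (i+1)).card + 1) ≤
          ∑ c ∈ L.image m, (c.1.card + 1) := by
        rw [Finset.sum_image hinj]
        refine Finset.sum_le_sum ?_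
        intro u hu
        have := hB1min (m u).1 (hbodies _ (hm1 u hu)) (hm2 u hu)
        omega
      have hsum2 : ∑ c ∈ L.image m, (c.1.card + 1) ≤
          ∑ c ∈ Φ.filter (fun c => c.2 ∈ L), (c.1.card + 1) :=
        Finset.sum_le_sum_of_subset himsub
      have hdisj : Disjoint (Φ.filter fun c => c.2 ∉ L) (L.image (fun u => (Bseq i, u))) := by
        rw [Finset.disjoint_left]
        intro c hc hc'
        obtain ⟨u, hu, h'⟩ := Finset.mem_image.mp hc'
        have hcu : c.2 = u := by rw [← h']
        exact (Finset.mem_filter.mp hc).2 (hcu ▸ hu)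
      have himg : ∑ c ∈ L.image (fun u => (Bseq i, u)), (c.1.card + 1) =
          ∑ _u ∈ L, ((Bseq i).card + 1) := by
        refine Finset.sum_image ?_
        intro x _ y _ h
        exact ((Prod.mk.injEq _ _ _ _).mp h).2
      have hsizeΦ' : sizeL Φ' = ∑ c ∈ Φ.filter (fun c => ¬ c.2 ∈ L), (c.1.card + 1) +
          ∑ _u ∈ L, ((Bseq i).card + 1) := by
        rw [hΦ'def, sizeL, Finset.sum_union hdisj, himg]
      have hsplit2 : (∑ c ∈ Φ.filter (fun c => c.2 ∈ L), (c.1.card + 1)) +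
          (∑ c ∈ Φ.filter (fun c => ¬ c.2 ∈ L), (c.1.card + 1)) = sizeL Φ :=
        Finset.sum_filter_add_sum_filter_not Φ _ _
      have hLeq : ∑ _u ∈ L, ((Bseq i).card + 1) = ∑ _u ∈ L, ((Bseq (i+1)).card + 1) := by
        rw [heq]
      have hfinal : sizeL Φ' ≤ sizeL Φ := by
        rw [hsizeΦ', hLeq]
        omega
      have hprice := price_le_sizeL hPH' hbodies' hreach'
      have hΦ'opt : sizeL Φ' = price sizeL 𝓑 S S' := by omega
      have := hround Φ' (t-1) hPH' hbodies' hreach' hΦ'opt hstab'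
      omega
  · -- case i + 1 = t : delete the clause cv
    have hvS' : v ∉ S' := by
      rw [← hBt, ← hit]; exact hvB
    set Φ' : Finset (Finset V × V) := Φ.erase cv with hΦ'def
    have hsub : ∀ c ∈ Φ, c.2 ≠ v → c ∈ Φ' := fun c hc h =>
      Finset.mem_erase.mpr ⟨fun he => h (he ▸ hcvh), hc⟩
    have hPH' : PureHorn Φ' := fun c hc => hPH c (Finset.mem_of_mem_erase hc)
    have hbodies' : ∀ c ∈ Φ', c.1 ∈ 𝓑 := fun c hc => hbodies c (Finset.mem_of_mem_erase hc)
    have hk1 := key1 (Φ := Φ) (Φ' := Φ') (S := S) (v := v) (i := i) hv0 hsub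
    have hreach' : ↑S' ⊆ hornClosure Φ' ↑S := by
      intro x hx
      have hx' : x ∈ S' := by exact_mod_cast hx
      have hxW : x ∈ fcChain Φ S t := hS'Wt hx'
      rw [← hit] at hxW
      exact hk1 (i+1) le_rfl x hxW (fun h => hvS' (h ▸ hx'))
    have hsize' : sizeL Φ' + (cv.1.card + 1) = sizeL Φ :=
      Finset.sum_erase_add Φ _ hcvΦ
    have := price_le_sizeL hPH' hbodies' hreach'
    omega
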